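/- arXiv:2103.02427 — 6 statements merged into one kernel-verified Lean document; each statement's English description precedes it below -/
import Mathlib

section
/- Let f(x) = a₁x + a₂x² + a₃x³ + ⋯ be a formal power series with zero constant term and f^(n) its n-fold composition. Then for all n ≥ 1, the coefficient of x³ in f^(n) satisfies f_3^(n) = a₁^{n−1} a₃ ∑_{i=0}^{n−1} a₁^{2i} + 2 a₁^{n−1} a₂² ∑_{i=0}^{n−2} a₁^{2i} ∑_{i₁=0}^{n−i−2} a₁^{i₁}. -/
open PowerSeries Finset

/-- Composition of formal power series (meaningful when `g` has zero constant term):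
the coefficient of `x^k` in `f(g(x))` is `∑_{j=0}^{k} f_j · [x^k](g^j)`. -/
noncomputable def pscomp {R : Type*} [CommRing R] (f g : PowerSeries R) : PowerSeries R :=
  PowerSeries.mk fun k =>
    ∑ j ∈ Finset.range (k + 1), (PowerSeries.coeff j f) * (PowerSeries.coeff k (g ^ j))

/-- The `n`-fold composition `f^(n)`: `f^(1) = f`, `f^(n) = f^(n-1) ∘ f`. -/
noncomputable def psiter {R : Type*} [CommRing R] (f : PowerSeries R) : ℕ → PowerSeries R
  | 0 => PowerSeries.X
  | 1 => f
  | (n + 2) => pscomp (psiter f (n + 1)) f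

section aux
variable {K : Type*} [Field K] (a : ℕ → K)

lemma geom_step (A : K) (m : ℕ) :
    ∑ i ∈ Finset.range (m + 1), A ^ i = 1 + A * ∑ i ∈ Finset.range m, A ^ i := by
  rw [Finset.sum_range_succ', Finset.mul_sum, add_comm]
  simp [pow_succ, mul_comm]

lemma sq_step (A : K) (m : ℕ) :
    ∑ i ∈ Finset.range (m + 1), A ^ (2 * i)
      = 1 + A ^ 2 * ∑ i ∈ Finset.range m, A ^ (2 * i) := by
  rw [Finset.sum_range_succ', Finset.mul_sum, add_comm]
  congr 1
  · simp
  · apply Finset.sum_congr rfl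
    intro i _
    rw [show 2 * (i + 1) = 2 + 2 * i by ring, pow_add]

lemma B_step (A : K) (p : ℕ) :
    ∑ i ∈ Finset.range (p + 1), A ^ (2 * i) * ∑ i1 ∈ Finset.range (p + 1 + 1 - i - 1), A ^ i1
      = (∑ i1 ∈ Finset.range (p + 1), A ^ i1)
        + A ^ 2 * ∑ i ∈ Finset.range p, A ^ (2 * i) *
            ∑ i1 ∈ Finset.range (p + 1 - i - 1), A ^ i1 := by
  rw [Finset.sum_range_succ', add_comm]
  congr 1
  · simp
  · rw [Finset.mul_sum]
    apply Finset.sum_congr rfl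
    intro i _
    have h : p + 1 + 1 - (i + 1) - 1 = p + 1 - i - 1 := by omega
    rw [h, show 2 * (i + 1) = 2 + 2 * i by ring, pow_add]
    ring

lemma coeff_sq0 (h0 : a 0 = 0) : PowerSeries.coeff 0 ((PowerSeries.mk a) ^ 2) = 0 := by
  rw [PowerSeries.coeff_zero_eq_constantCoeff, map_pow, PowerSeries.constantCoeff_mk, h0]
  simp

lemma coeff_sq1 (h0 : a 0 = 0) : PowerSeries.coeff 1 ((PowerSeries.mk a) ^ 2) = 0 := by
  rw [sq, PowerSeries.coeff_mul, Finset.Nat.sum_antidiagonal_eq_sum_range_succ_mk]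
  simp [Finset.sum_range_succ, h0]

lemma coeff_sq2 (h0 : a 0 = 0) :
    PowerSeries.coeff 2 ((PowerSeries.mk a) ^ 2) = a 1 ^ 2 := by
  rw [sq, PowerSeries.coeff_mul, Finset.Nat.sum_antidiagonal_eq_sum_range_succ_mk]
  simp [Finset.sum_range_succ, h0, sq]

lemma coeff_sq3 (h0 : a 0 = 0) :
    PowerSeries.coeff 3 ((PowerSeries.mk a) ^ 2) = 2 * (a 1 * a 2) := by
  rw [sq, PowerSeries.coeff_mul, Finset.Nat.sum_antidiagonal_eq_sum_range_succ_mk]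
  simp [Finset.sum_range_succ, h0]
  ring

lemma coeff_cube3 (h0 : a 0 = 0) :
    PowerSeries.coeff 3 ((PowerSeries.mk a) ^ 3) = a 1 ^ 3 := by
  rw [pow_succ, PowerSeries.coeff_mul, Finset.Nat.sum_antidiagonal_eq_sum_range_succ_mk]
  rw [Finset.sum_range_succ, Finset.sum_range_succ, Finset.sum_range_succ, Finset.sum_range_succ,
    Finset.range_zero, Finset.sum_empty]
  rw [coeff_sq0 a h0, coeff_sq1 a h0, coeff_sq2 a h0, coeff_sq3 a h0]
  simp [h0]
  ring

lemma key (h0 : a 0 = 0) : ∀ n : ℕ, 1 ≤ n →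
    (PowerSeries.coeff 1 (psiter (PowerSeries.mk a) n) = a 1 ^ n) ∧
    (PowerSeries.coeff 2 (psiter (PowerSeries.mk a) n)
      = a 1 ^ (n - 1) * a 2 * ∑ i ∈ Finset.range n, a 1 ^ i) ∧
    (PowerSeries.coeff 3 (psiter (PowerSeries.mk a) n)
      = a 1 ^ (n - 1) * a 3 * (∑ i ∈ Finset.range n, a 1 ^ (2 * i))
        + 2 * a 1 ^ (n - 1) * a 2 ^ 2 *
            ∑ i ∈ Finset.range (n - 1), a 1 ^ (2 * i) *
              ∑ i1 ∈ Finset.range (n - i - 1), a 1 ^ i1) := by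
  intro n hn
  induction n with
  | zero => omega
  | succ m ih =>
    rcases Nat.eq_or_lt_of_le hn with h1 | h1
    · obtain rfl : m = 0 := by omega
      simp [psiter]
    · have hm : 1 ≤ m := by omega
      obtain ⟨h1', h2', h3'⟩ := ih hm
      obtain ⟨p, rfl⟩ : ∃ p, m = p + 1 := ⟨m - 1, by omega⟩
      have hps : psiter (PowerSeries.mk a) (p + 1 + 1)
          = pscomp (psiter (PowerSeries.mk a) (p + 1)) (PowerSeries.mk a) := rfl
      rw [hps]
      have hco : ∀ k, PowerSeries.coeff k
            (pscomp (psiter (PowerSeries.mk a) (p + 1)) (PowerSeries.mk a))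
          = ∑ j ∈ Finset.range (k + 1),
              (PowerSeries.coeff j (psiter (PowerSeries.mk a) (p + 1))) *
                (PowerSeries.coeff k ((PowerSeries.mk a) ^ j)) := by
        intro k; simp [pscomp]
      refine ⟨?_, ?_, ?_⟩
      · rw [hco 1]
        simp [Finset.sum_range_succ, h1', pow_succ]
      · rw [hco 2, Finset.sum_range_succ, Finset.sum_range_succ, Finset.sum_range_succ,
          Finset.range_zero, Finset.sum_empty, pow_zero, pow_one, PowerSeries.coeff_one,
          coeff_sq2 a h0, h1', h2', coeff_mk]
        simp only [Nat.add_sub_cancel, if_neg (show (2:ℕ) ≠ 0 by norm_num), mul_zero, zero_add]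
        conv_rhs => rw [geom_step]
        ring
      · rw [hco 3, Finset.sum_range_succ, Finset.sum_range_succ, Finset.sum_range_succ,
          Finset.sum_range_succ, Finset.range_zero, Finset.sum_empty, pow_zero, pow_one,
          PowerSeries.coeff_one, coeff_sq3 a h0, coeff_cube3 a h0, h1', h2', h3', coeff_mk]
        simp only [Nat.add_sub_cancel, if_neg (show (3:ℕ) ≠ 0 by norm_num), mul_zero, zero_add]
        conv_rhs => rw [sq_step, B_step]
        ring
end aux

/-- `f_3^(n) = a₁^{n−1} a₃ ∑_{i=0}^{n−1} a₁^{2i}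
  + 2 a₁^{n−1} a₂² ∑_{i=0}^{n−2} a₁^{2i} ∑_{i₁=0}^{n−i−2} a₁^{i₁}`. -/
theorem coeff_three_psiter {K : Type*} [Field K] (a : ℕ → K) (h0 : a 0 = 0)
    (n : ℕ) (hn : 1 ≤ n) :
    PowerSeries.coeff 3 (psiter (PowerSeries.mk a) n) =
      a 1 ^ (n - 1) * a 3 * (∑ i ∈ Finset.range n, a 1 ^ (2 * i))
      + 2 * a 1 ^ (n - 1) * a 2 ^ 2 *
          ∑ i ∈ Finset.range (n - 1), a 1 ^ (2 * i) * ∑ i1 ∈ Finset.range (n - i - 1), a 1 ^ i1 :=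
  (key a h0 n hn).2.2
end

section
/- Let f(x) = a₁x + a₂x² + a₃x³ + a₄x⁴ + ⋯ be a formal power series with zero constant term and f^(n) its n-fold composition. Then f_4^(n) = a₁^{n−1} a₄ ∑_{i=0}^{n−1} a₁^{3i} + a₁^{n−1} a₂ a₃ [3 a₁ ∑_{i=0}^{n−2} a₁^{3i} ∑_{i₁=0}^{n−i−2} a₁^{2 i₁} + 2 ∑_{i=0}^{n−2} a₁^{3i} ∑_{i₁=0}^{n−i−2} a₁^{i₁}] + a₂³ a₁^{n−2} [∑_{i=0}^{n−2} a₁^{3i} ∑_{i₁=0}^{n−i−2} a₁^{i₁} + 6 a₁² ∑_{i=0}^{n−3} a₁^{3i} ∑_{i₁=0}^{n−i−3} a₁^{2 i₁} ∑_{i₂=0}^{n−i−i₁−3} a₁^{i₂}]. -/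
open PowerSeries Finset

section Aux
variable {K : Type*} [Field K]

private def s1' (b : K) (n : ℕ) : K := ∑ i ∈ Finset.range n, b ^ i
private def s2' (b : K) (n : ℕ) : K := ∑ i ∈ Finset.range n, b ^ (2*i)
private def sA' (b : K) (n : ℕ) : K := ∑ i ∈ Finset.range n, b ^ (3*i)
private def sE' (b : K) (n : ℕ) : K := ∑ i ∈ Finset.range n, b^(2*i) * s1' b (n - i)
private def sB' (b : K) (n : ℕ) : K := ∑ i ∈ Finset.range n, b^(3*i) * s2' b (n - i)
private def sC' (b : K) (n : ℕ) : K := ∑ i ∈ Finset.range n, b^(3*i) * s1' b (n - i)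
private def sD' (b : K) (n : ℕ) : K :=
  ∑ i ∈ Finset.range n, b^(3*i) *
    (∑ i1 ∈ Finset.range (n-i), b^(2*i1) * s1' b (n - i - i1))

variable (b : K)

private lemma s1_succ (n : ℕ) : s1' b (n+1) = 1 + b * s1' b n := by
  simp [s1', Finset.sum_range_succ', pow_succ, ← Finset.sum_mul]; ring

private lemma s2_succ (n : ℕ) : s2' b (n+1) = 1 + b^2 * s2' b n := by
  rw [s2', Finset.sum_range_succ']
  simp only [Nat.mul_succ, pow_add, Nat.mul_zero, pow_zero]
  rw [s2', Finset.mul_sum, add_comm]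
  congr 1
  exact Finset.sum_congr rfl fun i _ => by ring

private lemma sA_succ (n : ℕ) : sA' b (n+1) = 1 + b^3 * sA' b n := by
  rw [sA', Finset.sum_range_succ']
  simp only [Nat.mul_succ, pow_add, Nat.mul_zero, pow_zero]
  rw [sA', Finset.mul_sum, add_comm]
  congr 1
  exact Finset.sum_congr rfl fun i _ => by ring

private lemma sE_succ (n : ℕ) : sE' b (n+1) = s1' b (n+1) + b^2 * sE' b n := by
  rw [sE', Finset.sum_range_succ']
  simp only [Nat.succ_sub_succ, Nat.mul_succ, pow_add, Nat.mul_zero, pow_zero,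
    Nat.sub_zero, one_mul]
  rw [sE', Finset.mul_sum, add_comm]
  congr 1
  exact Finset.sum_congr rfl fun i _ => by ring

private lemma sB_succ (n : ℕ) : sB' b (n+1) = s2' b (n+1) + b^3 * sB' b n := by
  rw [sB', Finset.sum_range_succ']
  simp only [Nat.succ_sub_succ, Nat.mul_succ, pow_add, Nat.mul_zero, pow_zero,
    Nat.sub_zero, one_mul]
  rw [sB', Finset.mul_sum, add_comm]
  congr 1
  exact Finset.sum_congr rfl fun i _ => by ring

private lemma sC_succ (n : ℕ) : sC' b (n+1) = s1' b (n+1) + b^3 * sC' b n := by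
  rw [sC', Finset.sum_range_succ']
  simp only [Nat.succ_sub_succ, Nat.mul_succ, pow_add, Nat.mul_zero, pow_zero,
    Nat.sub_zero, one_mul]
  rw [sC', Finset.mul_sum, add_comm]
  congr 1
  exact Finset.sum_congr rfl fun i _ => by ring

private lemma sD_succ (n : ℕ) : sD' b (n+1) = sE' b (n+1) + b^3 * sD' b n := by
  rw [sD', Finset.sum_range_succ']
  simp only [Nat.succ_sub_succ, Nat.mul_succ, pow_add, Nat.mul_zero, pow_zero,
    Nat.sub_zero, one_mul]
  rw [sD', Finset.mul_sum, add_comm, sE']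
  congr 1
  exact Finset.sum_congr rfl fun i _ => by ring

private lemma sD_pred (n : ℕ) : sD' b n = sE' b n + b^3 * sD' b (n-1) := by
  cases n with
  | zero => simp [sD', sE']
  | succ m => exact sD_succ b m

end Aux

section Coeffs
variable {K : Type*} [Field K] (a : ℕ → K)

private lemma coeff_pow2 (h0 : a 0 = 0) (k : ℕ) (hk : k ≤ 4) :
    PowerSeries.coeff k ((PowerSeries.mk a)^2) =
      if k = 2 then a 1^2 else if k = 3 then 2*a 1*a 2 else if k = 4 then 2*a 1*a 3 + a 2^2 else 0 := by
  interval_cases k <;>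
  · rw [sq, PowerSeries.coeff_mul, Finset.Nat.sum_antidiagonal_eq_sum_range_succ_mk]
    simp [Finset.sum_range_succ, h0]
    try ring

private lemma coeff_pow3 (h0 : a 0 = 0) (k : ℕ) (hk : k ≤ 4) :
    PowerSeries.coeff k ((PowerSeries.mk a)^3) =
      if k = 3 then a 1^3 else if k = 4 then 3*a 1^2*a 2 else 0 := by
  have h2 := coeff_pow2 a h0
  interval_cases k <;>
  · rw [pow_succ, PowerSeries.coeff_mul, Finset.Nat.sum_antidiagonal_eq_sum_range_succ_mk]
    simp [Finset.sum_range_succ, h0, h2 0, h2 1, h2 2, h2 3, h2 4]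
    try ring

private lemma coeff_pow4 (h0 : a 0 = 0) :
    PowerSeries.coeff 4 ((PowerSeries.mk a)^4) = a 1^4 := by
  have h3 := coeff_pow3 a h0
  rw [pow_succ, PowerSeries.coeff_mul, Finset.Nat.sum_antidiagonal_eq_sum_range_succ_mk]
  simp [Finset.sum_range_succ, h0, h3 0, h3 1, h3 2, h3 3, h3 4]
  ring

private lemma coeff1_comp (h0 : a 0 = 0) (g : PowerSeries K) :
    PowerSeries.coeff 1 (pscomp g (PowerSeries.mk a)) =
      PowerSeries.coeff 1 g * a 1 := by
  rw [pscomp, PowerSeries.coeff_mk]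
  simp [Finset.sum_range_succ]

private lemma coeff2_comp (h0 : a 0 = 0) (g : PowerSeries K) :
    PowerSeries.coeff 2 (pscomp g (PowerSeries.mk a)) =
      PowerSeries.coeff 1 g * a 2 + PowerSeries.coeff 2 g * a 1^2 := by
  rw [pscomp, PowerSeries.coeff_mk]
  simp [Finset.sum_range_succ, coeff_pow2 a h0 2 (by norm_num)]

private lemma coeff3_comp (h0 : a 0 = 0) (g : PowerSeries K) :
    PowerSeries.coeff 3 (pscomp g (PowerSeries.mk a)) =
      PowerSeries.coeff 1 g * a 3 + PowerSeries.coeff 2 g * (2*a 1*a 2)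
        + PowerSeries.coeff 3 g * a 1^3 := by
  rw [pscomp, PowerSeries.coeff_mk]
  simp [Finset.sum_range_succ, coeff_pow2 a h0 3 (by norm_num),
    coeff_pow3 a h0 3 (by norm_num)]

private lemma coeff4_comp (h0 : a 0 = 0) (g : PowerSeries K) :
    PowerSeries.coeff 4 (pscomp g (PowerSeries.mk a)) =
      PowerSeries.coeff 1 g * a 4 + PowerSeries.coeff 2 g * (2*a 1*a 3 + a 2^2)
        + PowerSeries.coeff 3 g * (3*a 1^2*a 2) + PowerSeries.coeff 4 g * a 1^4 := by
  rw [pscomp, PowerSeries.coeff_mk]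
  simp [Finset.sum_range_succ, coeff_pow2 a h0 4 (by norm_num),
    coeff_pow3 a h0 4 (by norm_num), coeff_pow4 a h0]

private lemma coeff1_iter (h0 : a 0 = 0) (m : ℕ) :
    PowerSeries.coeff 1 (psiter (PowerSeries.mk a) (m+1)) = a 1 ^ (m+1) := by
  induction m with
  | zero => simp [psiter]
  | succ k ih =>
      show PowerSeries.coeff 1 (pscomp (psiter (PowerSeries.mk a) (k+1)) (PowerSeries.mk a)) = _
      rw [coeff1_comp a h0, ih]; ring

private lemma coeff2_iter (h0 : a 0 = 0) (m : ℕ) :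
    PowerSeries.coeff 2 (psiter (PowerSeries.mk a) (m+1)) =
      a 2 * a 1 ^ m * s1' (a 1) (m+1) := by
  induction m with
  | zero => simp [psiter, s1']
  | succ k ih =>
      show PowerSeries.coeff 2 (pscomp (psiter (PowerSeries.mk a) (k+1)) (PowerSeries.mk a)) = _
      rw [coeff2_comp a h0, coeff1_iter a h0, ih]
      simp only [s1_succ]
      ring

private lemma coeff3_iter (h0 : a 0 = 0) (m : ℕ) :
    PowerSeries.coeff 3 (psiter (PowerSeries.mk a) (m+1)) =
      a 1 ^ m * (a 3 * s2' (a 1) (m+1) + 2 * a 2^2 * sE' (a 1) m) := by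
  induction m with
  | zero => simp [psiter, s2', sE']
  | succ k ih =>
      show PowerSeries.coeff 3 (pscomp (psiter (PowerSeries.mk a) (k+1)) (PowerSeries.mk a)) = _
      rw [coeff3_comp a h0, coeff1_iter a h0, coeff2_iter a h0, ih]
      simp only [s1_succ, s2_succ, sE_succ]
      ring

private lemma coeff4_iter (h0 : a 0 = 0) (m : ℕ) :
    PowerSeries.coeff 4 (psiter (PowerSeries.mk a) (m+1)) =
      a 1 ^ m * a 4 * sA' (a 1) (m+1)
      + a 1 ^ m * a 2 * a 3 * (3 * a 1 * sB' (a 1) m + 2 * sC' (a 1) m)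
      + a 2 ^ 3 * a 1 ^ (m-1) * (sC' (a 1) m + 6 * a 1^2 * sD' (a 1) (m-1)) := by
  induction m with
  | zero => simp [psiter, sA', sB', sC', sD', s1']
  | succ k ih =>
      show PowerSeries.coeff 4 (pscomp (psiter (PowerSeries.mk a) (k+1)) (PowerSeries.mk a)) = _
      rw [coeff4_comp a h0, coeff1_iter a h0, coeff2_iter a h0, coeff3_iter a h0, ih]
      simp only [Nat.add_sub_cancel, sA_succ, sB_succ, sC_succ]
      rw [sD_pred (a 1) k]
      cases k with
      | zero => simp [sB', sC', sD', sE', s1', s2', sA']; ring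
      | succ j =>
          simp only [Nat.add_sub_cancel]
          ring

end Coeffs

/-- The explicit formula for `f_4^(n)` (empty sums are `0`). -/
theorem coeff_four_psiter {K : Type*} [Field K] (a : ℕ → K) (h0 : a 0 = 0) (ha1 : a 1 ≠ 0)
    (n : ℕ) (hn : 1 ≤ n) :
    PowerSeries.coeff 4 (psiter (PowerSeries.mk a) n) =
      a 1 ^ (n - 1) * a 4 * (∑ i ∈ Finset.range n, a 1 ^ (3 * i))
      + a 1 ^ (n - 1) * a 2 * a 3 *
          (3 * a 1 * ∑ i ∈ Finset.range (n - 1),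
              a 1 ^ (3 * i) * ∑ i1 ∈ Finset.range (n - i - 1), a 1 ^ (2 * i1)
           + 2 * ∑ i ∈ Finset.range (n - 1),
              a 1 ^ (3 * i) * ∑ i1 ∈ Finset.range (n - i - 1), a 1 ^ i1)
      + a 2 ^ 3 * a 1 ^ (n - 2) *
          ((∑ i ∈ Finset.range (n - 1),
              a 1 ^ (3 * i) * ∑ i1 ∈ Finset.range (n - i - 1), a 1 ^ i1)
           + 6 * a 1 ^ 2 * ∑ i ∈ Finset.range (n - 2),
              a 1 ^ (3 * i) * ∑ i1 ∈ Finset.range (n - i - 2),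
                a 1 ^ (2 * i1) * ∑ i2 ∈ Finset.range (n - i - i1 - 2), a 1 ^ i2) := by
  cases n with
  | zero => omega
  | succ m =>
    rw [coeff4_iter a h0 m]
    have e1 : ∀ i : ℕ, m + 1 - i - 1 = m - i := fun i => by omega
    have e2 : ∀ i : ℕ, m + 1 - i - 2 = m - 1 - i := fun i => by omega
    have e3 : ∀ i i1 : ℕ, m + 1 - i - i1 - 2 = m - 1 - i - i1 := fun i i1 => by omega
    simp only [Nat.add_sub_cancel, e1, e2, e3, show m + 1 - 2 = m - 1 from by omega]
    simp only [sA', sB', sC', sD', s1', s2']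
end

section
/- Let f(x) = a₁x + ⋯ + a_k x^k + ⋯ be a formal power series with zero constant term, and write (f(x))^j = ∑_{m} a_m^{[j]} x^m and f^(n)(x) = ∑_k f_k^(n) x^k. Then for every k ≥ 2 and n ≥ 1, f_k^(n) = a_k a₁^{n−1} ∑_{i=0}^{n−1} a₁^{i(k−1)} + ∑_{i=0}^{n−2} a₁^{k i} ( ∑_{j=2}^{k−1} f_j^{(n−i−1)} a_k^{[j]} ). -/
open PowerSeries Finset

section
variable {R : Type*} [CommRing R]

lemma aux_X_dvd (a : ℕ → R) (h0 : a 0 = 0) : (X : R⟦X⟧) ∣ mk a :=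
  X_dvd_iff.mpr (by simp [constantCoeff_mk, h0])

lemma aux_coeff_pow_zero (a : ℕ → R) (h0 : a 0 = 0) {j k : ℕ} (h : k < j) :
    coeff k (mk a ^ j) = 0 :=
  X_pow_dvd_iff.mp (pow_dvd_pow_of_dvd (aux_X_dvd a h0) j) k h

lemma aux_coeff_pow_self (a : ℕ → R) (h0 : a 0 = 0) (k : ℕ) :
    coeff k (mk a ^ k) = a 1 ^ k := by
  obtain ⟨g, hg⟩ := aux_X_dvd a h0
  have hg1 : constantCoeff g = a 1 := by
    have := coeff_succ_X_mul 0 g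
    rw [← hg, coeff_mk] at this
    rw [← coeff_zero_eq_constantCoeff_apply, this]
  have h2 := coeff_X_pow_mul (g ^ k) k 0
  rw [zero_add] at h2
  rw [hg, mul_pow, h2, coeff_zero_eq_constantCoeff_apply, map_pow, hg1]

lemma aux_coeff_one_psiter (a : ℕ → R) (n : ℕ) :
    coeff 1 (psiter (mk a) (n + 1)) = a 1 ^ (n + 1) := by
  induction n with
  | zero => simp [psiter]
  | succ m ih =>
    show coeff 1 (pscomp (psiter (mk a) (m+1)) (mk a)) = _
    simp [pscomp, Finset.sum_range_succ, ih, coeff_one, pow_succ]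

lemma aux_psiter_succ (a : ℕ → R) (h0 : a 0 = 0) (n : ℕ) :
    psiter (mk a) (n + 1) = pscomp (psiter (mk a) n) (mk a) := by
  cases n with
  | zero =>
    show (mk a : R⟦X⟧) = pscomp X (mk a)
    ext m
    cases m with
    | zero => simp [pscomp, coeff_zero_eq_constantCoeff_apply, constantCoeff_mk, h0]
    | succ m =>
      simp only [pscomp, coeff_mk]
      rw [Finset.sum_eq_single 1]
      · simp
      · intro b _ hb
        rcases Nat.lt_or_ge b 1 with h | h
        · interval_cases b; simp
        · have : 2 ≤ b := by omega
          rw [coeff_X, if_neg (by omega), zero_mul]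
      · intro h; exact absurd (Finset.mem_range.mpr (by omega)) h
  | succ n => rfl

lemma aux_split (a : ℕ → R) (h0 : a 0 = 0) (P : R⟦X⟧) (k : ℕ) (hk : 2 ≤ k) :
    coeff k (pscomp P (mk a)) =
      coeff 1 P * a k
      + (∑ j ∈ Finset.Icc 2 (k-1), coeff j P * coeff k (mk a ^ j))
      + coeff k P * a 1 ^ k := by
  simp only [pscomp, coeff_mk]
  have hset : Finset.range (k+1) = insert 0 (insert 1 (insert k (Finset.Icc 2 (k-1)))) := by
    ext x; simp [Finset.mem_range, Finset.mem_insert, Finset.mem_Icc]; omega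
  rw [hset, Finset.sum_insert (by simp [Finset.mem_Icc]; omega),
    Finset.sum_insert (by simp [Finset.mem_Icc]; omega),
    Finset.sum_insert (by simp [Finset.mem_Icc]; omega)]
  rw [pow_zero, pow_one, coeff_one, if_neg (by omega), mul_zero, zero_add,
    coeff_mk, aux_coeff_pow_self a h0]
  ring
end

/-- The Main Recursive Lemma: for `k ≥ 2` and `n ≥ 1`,
`f_k^(n) = a_k a₁^{n−1} ∑_{i=0}^{n−1} a₁^{i(k−1)}
  + ∑_{i=0}^{n−2} a₁^{ki} ∑_{j=2}^{k−1} f_j^{(n−i−1)} a_k^{[j]}`,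
where `a_k^{[j]}` is the coefficient of `x^k` in `(f(x))^j`. -/

theorem main_recursive_lemma {R : Type*} [CommRing R] (a : ℕ → R) (h0 : a 0 = 0)
    (k n : ℕ) (hk : 2 ≤ k) (hn : 1 ≤ n) :
    PowerSeries.coeff k (psiter (PowerSeries.mk a) n) =
      a k * a 1 ^ (n - 1) * (∑ i ∈ Finset.range n, a 1 ^ (i * (k - 1)))
      + ∑ i ∈ Finset.range (n - 1), a 1 ^ (k * i) *
          ∑ j ∈ Finset.Icc 2 (k - 1),
            PowerSeries.coeff j (psiter (PowerSeries.mk a) (n - i - 1)) *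
              PowerSeries.coeff k ((PowerSeries.mk a) ^ j) := by
  obtain ⟨m, rfl⟩ : ∃ m, n = m + 1 := ⟨n - 1, by omega⟩
  clear hn
  induction m with
  | zero => simp [psiter]
  | succ m ih =>
    simp only [Nat.add_sub_cancel] at ih ⊢
    rw [aux_psiter_succ a h0 (m+1), aux_split a h0 _ k hk, ih,
      aux_coeff_one_psiter a m]
    set A := a 1 with hA
    set S : ℕ → R := fun t => ∑ j ∈ Finset.Icc 2 (k-1),
      coeff j (psiter (mk a) t) * coeff k (mk a ^ j) with hS
    rw [Finset.sum_range_succ' (fun i => A ^ (i * (k - 1))) (m+1),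
      Finset.sum_range_succ' (fun i => A ^ (k * i) * S (m + 1 + 1 - i - 1)) m]
    have H1 : (∑ i ∈ Finset.range (m+1), A ^ ((i+1) * (k - 1)))
        = A ^ (k-1) * ∑ i ∈ Finset.range (m+1), A ^ (i * (k - 1)) := by
      rw [Finset.mul_sum]
      refine Finset.sum_congr rfl fun i _ => ?_
      rw [Nat.succ_mul, pow_add]; ring
    have H2 : (∑ i ∈ Finset.range m, A ^ (k * (i+1)) * S (m + 1 + 1 - (i+1) - 1))
        = A ^ k * ∑ i ∈ Finset.range m, A ^ (k * i) * S (m + 1 - i - 1) := by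
      rw [Finset.mul_sum]
      refine Finset.sum_congr rfl fun i hi => ?_
      have h' : m + 1 + 1 - (i+1) - 1 = m + 1 - i - 1 := by omega
      rw [h', Nat.mul_succ, pow_add]; ring
    rw [H1, H2]
    simp only [Nat.zero_mul, Nat.mul_zero, pow_zero, one_mul, Nat.sub_zero,
      Nat.add_sub_cancel]
    have hAk : A ^ k = A ^ (k-1) * A := by
      rw [← pow_succ]; congr 1; omega
    rw [hAk, pow_succ]
    ring
end

section
/- Let f(x) = a₁x + a₂x² + ⋯ with a₁ ≠ 0 in a field, and let f^(n) be its n-fold composition with coefficients f_k^(n). Then for each k ≥ 2 and n ≥ 1, f_k^(n) − a_k a₁^{n−1} ∑_{i=0}^{n−1} a₁^{(k−1)i} is a polynomial (with integer coefficients) in a₁, a₂, …, a_{k−1} in which every monomial contains some a_j with 2 ≤ j ≤ k−1; in particular, if a₂ = a₃ = ⋯ = a_{k−1} = 0 then f_k^(n) = a_k a₁^{n−1} ∑_{i=0}^{n−1} a₁^{(k−1)i}. -/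
open PowerSeries Finset

/-- Key coefficient lemma: if `r` has order ≥ k, then for `j ≥ 2`,
`[x^k]((C a₁ · X + r)^j) = a₁^k` if `j = k` else `0`. -/
lemma coeff_pow_aux {K : Type*} [Field K] (a₁ : K) (r : PowerSeries K) (k : ℕ) (hk : 2 ≤ k)
    (hr : ∀ m < k, coeff m r = 0) (j : ℕ) (hj : 2 ≤ j) :
    coeff k ((C a₁ * X + r) ^ j) = if j = k then a₁ ^ k else 0 := by
  have hrdvd : (X : PowerSeries K) ^ k ∣ r := X_pow_dvd_iff.mpr hr
  rw [add_pow, map_sum]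
  rw [Finset.sum_eq_single j]
  · simp only [Nat.sub_self, pow_zero, mul_one, Nat.choose_self, Nat.cast_one]
    rw [mul_pow, ← map_pow, coeff_C_mul, coeff_X_pow]
    by_cases h : j = k
    · simp [h]
    · rw [if_neg h, if_neg (fun hh => h hh.symm)]
      simp
  · intro i hi hij
    have hi' : i < j := lt_of_le_of_ne (Nat.lt_succ_iff.mp (Finset.mem_range.mp hi)) hij
    have hdvd : (X : PowerSeries K) ^ (i + k * (j - i)) ∣
        (C a₁ * X) ^ i * r ^ (j - i) * (j.choose i : PowerSeries K) := by
      apply Dvd.dvd.mul_right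
      rw [pow_add]
      apply mul_dvd_mul
      · rw [mul_pow]
        exact Dvd.dvd.mul_left dvd_rfl _
      · rw [pow_mul]
        exact pow_dvd_pow_of_dvd hrdvd _
    apply X_pow_dvd_iff.mp hdvd
    have h1 : 1 ≤ j - i := by omega
    have h2 : k ≤ k * (j - i) := Nat.le_mul_of_pos_right k (by omega)
    rcases Nat.eq_zero_or_pos i with h | h
    · have : 2 ≤ j - i := by omega
      have : 2 * k ≤ k * (j - i) := by nlinarith
      omega
    · omega
  · intro h
    exact absurd (Finset.self_mem_range_succ j) h

lemma coeff_pscomp {K : Type*} [Field K] (f g : PowerSeries K) (k : ℕ) :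
    coeff k (pscomp f g) = ∑ j ∈ Finset.range (k + 1), coeff j f * coeff k (g ^ j) := by
  simp [pscomp, coeff_mk]

/-- Cohen's Lemma (special-case consequence): if `a₁ ≠ 0` and `a_j = 0` for all
`2 ≤ j ≤ k−1`, then `f_k^(n) = a_k a₁^{n−1} ∑_{i=0}^{n−1} a₁^{(k−1)i}`. -/
theorem cohen_lemma {K : Type*} [Field K] (a : ℕ → K) (h0 : a 0 = 0) (ha1 : a 1 ≠ 0)
    (k n : ℕ) (hk : 2 ≤ k) (hn : 1 ≤ n)
    (hzero : ∀ j, 2 ≤ j → j ≤ k - 1 → a j = 0) :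
    PowerSeries.coeff k (psiter (PowerSeries.mk a) n) =
      a k * a 1 ^ (n - 1) * ∑ i ∈ Finset.range n, a 1 ^ ((k - 1) * i) := by
  set f := PowerSeries.mk a with hf
  -- decomposition f = C a₁ * X + r
  set r := f - C (a 1) * X with hrdef
  have hfr : f = C (a 1) * X + r := by ring
  have hr : ∀ m < k, coeff m r = 0 := by
    intro m hm
    simp only [hrdef, map_sub, coeff_mk, coeff_C_mul, hf]
    rcases Nat.lt_or_ge m 2 with h | h
    · interval_cases m <;> simp [h0, coeff_X, coeff_mk]
    · rw [coeff_X, if_neg (by omega : ¬ m = 1), hzero m h (by omega)]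
      ring
  have hpow : ∀ j, 2 ≤ j → coeff k (f ^ j) = if j = k then a 1 ^ k else 0 := by
    intro j hj; rw [hfr]; exact coeff_pow_aux (a 1) r k hk hr j hj
  have hc1 : coeff 1 f = a 1 := by simp [hf, coeff_mk]
  have hck : coeff k f = a k := by simp [hf, coeff_mk]
  -- coefficient of x^1 of iterates
  have hiter1 : ∀ m, 1 ≤ m → coeff 1 (psiter f m) = a 1 ^ m := by
    intro m hm
    induction m with
    | zero => omega
    | succ m ih =>
      rcases Nat.lt_or_ge m 1 with h | h
      · interval_cases m
        simpa [psiter] using hc1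
      · obtain ⟨p, rfl⟩ : ∃ p, m = p + 1 := ⟨m - 1, by omega⟩
        show coeff 1 (pscomp (psiter f (p + 1)) f) = _
        rw [coeff_pscomp]
        rw [Finset.sum_range_succ, Finset.sum_range_one]
        simp only [pow_zero, pow_one]
        rw [ih h, hc1]
        have : coeff 1 (1 : PowerSeries K) = 0 := by simp
        rw [this, mul_zero, zero_add]
        ring
  -- main induction
  clear_value r
  induction n with
  | zero => omega
  | succ n ih =>
    rcases Nat.lt_or_ge n 1 with h | h
    · interval_cases n
      have h1 : psiter f 1 = f := rfl
      rw [h1, hck]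
      simp
    · obtain ⟨p, rfl⟩ : ∃ p, n = p + 1 := ⟨n - 1, by omega⟩
      have IH := ih h
      show coeff k (pscomp (psiter f (p + 1)) f) = _
      rw [coeff_pscomp]
      set F := psiter f (p + 1) with hF
      have hterm : ∀ j ∈ Finset.range (k + 1),
          coeff j F * coeff k (f ^ j) =
            (if j = 1 then coeff 1 F * a k else 0) +
            (if j = k then coeff k F * a 1 ^ k else 0) := by
        intro j hj
        rcases Nat.lt_or_ge j 2 with h2 | h2
        · interval_cases j
          · have h1 : coeff k (1 : PowerSeries K) = 0 := by
              rw [coeff_one, if_neg (by omega)]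
            rw [pow_zero, h1, mul_zero, if_neg (by omega : ¬ (0:ℕ) = 1),
              if_neg (by omega : ¬ (0:ℕ) = k)]
            ring
          · rw [if_pos rfl, if_neg (by omega : ¬ (1:ℕ) = k), pow_one, hck, add_zero]
        · have hj1 : ¬ j = 1 := by omega
          rw [hpow j h2, if_neg hj1]
          rcases eq_or_ne j k with hjk | hjk
          · rw [if_pos hjk, if_pos hjk, zero_add, hjk]
          · rw [if_neg hjk, if_neg hjk, mul_zero, zero_add]
      rw [Finset.sum_congr rfl hterm, Finset.sum_add_distrib,
        Finset.sum_ite_eq' _ 1, Finset.sum_ite_eq' _ k,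
        if_pos (Finset.mem_range.mpr (by omega)),
        if_pos (Finset.mem_range.mpr (by omega))]
      rw [hiter1 (p + 1) (by omega), IH]
      -- algebra
      rw [Finset.sum_range_succ' (fun i => a 1 ^ ((k - 1) * i)) (p + 1)]
      have hgeom : ∀ i : ℕ, a 1 ^ ((k - 1) * (i + 1)) = a 1 ^ ((k-1) * i) * a 1 ^ (k - 1) := by
        intro i; rw [← pow_add]; ring_nf
      simp only [hgeom, mul_zero, pow_zero]
      rw [← Finset.sum_mul]
      have hk1 : a 1 ^ (k - 1) * a 1 = a 1 ^ k := by
        rw [← pow_succ]; congr 1; omega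
      have hn1 : (p + 1 + 1 - 1) = p + 1 := rfl
      have hn2 : (p + 1 - 1) = p := rfl
      rw [hn1, hn2]
      ring_nf
      rw [← hk1]
      ring
end

section
/- Let f(x) = x + a₂x² + a₃x³ + a₄x⁴ + ⋯ (with a₁ = 1) and f^(n) its n-fold composition. Then the coefficient of x⁴ satisfies f_4^(n) = C(n,1) a₄ + C(n,2)(5 a₂ a₃ + a₂³) + 6 C(n,3) a₂³. -/
open PowerSeries Finset

section aux

variable {R : Type*} [CommRing R] (a : ℕ → R)

lemma pscomp_coeff (g : PowerSeries R) (k : ℕ) :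
    PowerSeries.coeff k (pscomp g (PowerSeries.mk a)) =
      ∑ j ∈ Finset.range (k + 1),
        (PowerSeries.coeff j g) * (PowerSeries.coeff k ((PowerSeries.mk a) ^ j)) := by
  simp [pscomp]

variable (h0 : a 0 = 0) (h1 : a 1 = 1)
include h0 h1

lemma pow2_2 : PowerSeries.coeff 2 ((PowerSeries.mk a) ^ 2) = 1 := by
  simp [pow_two, PowerSeries.coeff_mul, Finset.Nat.sum_antidiagonal_eq_sum_range_succ_mk,
    Finset.sum_range_succ, h0, h1]

lemma pow2_3 : PowerSeries.coeff 3 ((PowerSeries.mk a) ^ 2) = 2 * a 2 := by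
  simp [pow_two, PowerSeries.coeff_mul, Finset.Nat.sum_antidiagonal_eq_sum_range_succ_mk,
    Finset.sum_range_succ, h0, h1]
  ring

lemma pow2_4 : PowerSeries.coeff 4 ((PowerSeries.mk a) ^ 2) = 2 * a 3 + a 2 ^ 2 := by
  simp [pow_two, PowerSeries.coeff_mul, Finset.Nat.sum_antidiagonal_eq_sum_range_succ_mk,
    Finset.sum_range_succ, h0, h1]
  ring

lemma pow3_3 : PowerSeries.coeff 3 ((PowerSeries.mk a) ^ 3) = 1 := by
  have : ((PowerSeries.mk a) ^ 3) = (PowerSeries.mk a) ^ 2 * (PowerSeries.mk a) := by ring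
  rw [this, PowerSeries.coeff_mul, Finset.Nat.sum_antidiagonal_eq_sum_range_succ_mk]
  simp [Finset.sum_range_succ, pow2_2 a h0 h1, pow2_3 a h0 h1, h0, h1,
    show PowerSeries.coeff 0 ((PowerSeries.mk a) ^ 2) = 0 by
      simp [pow_two, PowerSeries.coeff_mul, Finset.Nat.sum_antidiagonal_eq_sum_range_succ_mk,
        Finset.sum_range_succ, h0],
    show PowerSeries.coeff 1 ((PowerSeries.mk a) ^ 2) = 0 by
      simp [pow_two, PowerSeries.coeff_mul, Finset.Nat.sum_antidiagonal_eq_sum_range_succ_mk,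
        Finset.sum_range_succ, h0]]

lemma pow3_4 : PowerSeries.coeff 4 ((PowerSeries.mk a) ^ 3) = 3 * a 2 := by
  have : ((PowerSeries.mk a) ^ 3) = (PowerSeries.mk a) ^ 2 * (PowerSeries.mk a) := by ring
  rw [this, PowerSeries.coeff_mul, Finset.Nat.sum_antidiagonal_eq_sum_range_succ_mk]
  simp [Finset.sum_range_succ, pow2_2 a h0 h1, pow2_3 a h0 h1, pow2_4 a h0 h1, h0, h1,
    show PowerSeries.coeff 0 ((PowerSeries.mk a) ^ 2) = 0 by
      simp [pow_two, PowerSeries.coeff_mul, Finset.Nat.sum_antidiagonal_eq_sum_range_succ_mk,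
        Finset.sum_range_succ, h0],
    show PowerSeries.coeff 1 ((PowerSeries.mk a) ^ 2) = 0 by
      simp [pow_two, PowerSeries.coeff_mul, Finset.Nat.sum_antidiagonal_eq_sum_range_succ_mk,
        Finset.sum_range_succ, h0]]
  ring

lemma pow4_4 : PowerSeries.coeff 4 ((PowerSeries.mk a) ^ 4) = 1 := by
  have : ((PowerSeries.mk a) ^ 4) = (PowerSeries.mk a) ^ 3 * (PowerSeries.mk a) := by ring
  rw [this, PowerSeries.coeff_mul, Finset.Nat.sum_antidiagonal_eq_sum_range_succ_mk]
  have e0 : PowerSeries.coeff 0 ((PowerSeries.mk a) ^ 3) = 0 := by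
    have : ((PowerSeries.mk a) ^ 3) = (PowerSeries.mk a) ^ 2 * (PowerSeries.mk a) := by ring
    rw [this, PowerSeries.coeff_mul, Finset.Nat.sum_antidiagonal_eq_sum_range_succ_mk]
    simp [Finset.sum_range_succ, h0]
  have e1 : PowerSeries.coeff 1 ((PowerSeries.mk a) ^ 3) = 0 := by
    have : ((PowerSeries.mk a) ^ 3) = (PowerSeries.mk a) ^ 2 * (PowerSeries.mk a) := by ring
    rw [this, PowerSeries.coeff_mul, Finset.Nat.sum_antidiagonal_eq_sum_range_succ_mk]
    simp [Finset.sum_range_succ, h0,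
      show PowerSeries.coeff 0 ((PowerSeries.mk a) ^ 2) = 0 by
        simp [pow_two, PowerSeries.coeff_mul, Finset.Nat.sum_antidiagonal_eq_sum_range_succ_mk,
          Finset.sum_range_succ, h0],
      show PowerSeries.coeff 1 ((PowerSeries.mk a) ^ 2) = 0 by
        simp [pow_two, PowerSeries.coeff_mul, Finset.Nat.sum_antidiagonal_eq_sum_range_succ_mk,
          Finset.sum_range_succ, h0]]
  have e2 : PowerSeries.coeff 2 ((PowerSeries.mk a) ^ 3) = 0 := by
    have : ((PowerSeries.mk a) ^ 3) = (PowerSeries.mk a) ^ 2 * (PowerSeries.mk a) := by ring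
    rw [this, PowerSeries.coeff_mul, Finset.Nat.sum_antidiagonal_eq_sum_range_succ_mk]
    simp [Finset.sum_range_succ, h0,
      show PowerSeries.coeff 0 ((PowerSeries.mk a) ^ 2) = 0 by
        simp [pow_two, PowerSeries.coeff_mul, Finset.Nat.sum_antidiagonal_eq_sum_range_succ_mk,
          Finset.sum_range_succ, h0],
      show PowerSeries.coeff 1 ((PowerSeries.mk a) ^ 2) = 0 by
        simp [pow_two, PowerSeries.coeff_mul, Finset.Nat.sum_antidiagonal_eq_sum_range_succ_mk,
          Finset.sum_range_succ, h0]]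
  simp [Finset.sum_range_succ, e0, e1, e2, pow3_3 a h0 h1, h0, h1]

lemma key_s12 (n : ℕ) (hn : 1 ≤ n) :
    PowerSeries.coeff 0 (psiter (PowerSeries.mk a) n) = 0 ∧
    PowerSeries.coeff 1 (psiter (PowerSeries.mk a) n) = 1 ∧
    PowerSeries.coeff 2 (psiter (PowerSeries.mk a) n) = (n : R) * a 2 ∧
    PowerSeries.coeff 3 (psiter (PowerSeries.mk a) n) =
      (n : R) * a 3 + 2 * (n.choose 2 : R) * a 2 ^ 2 ∧
    PowerSeries.coeff 4 (psiter (PowerSeries.mk a) n) =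
      (n.choose 1 : R) * a 4 + (n.choose 2 : R) * (5 * a 2 * a 3 + a 2 ^ 3)
        + 6 * (n.choose 3 : R) * a 2 ^ 3 := by
  induction n with
  | zero => omega
  | succ m ih =>
    rcases Nat.eq_or_lt_of_le hn with h | h
    · -- m + 1 = 1
      have hm : m = 0 := by omega
      subst hm
      simp [psiter, h0, h1, Nat.choose]
    · -- m ≥ 1
      have hm : 1 ≤ m := by omega
      obtain ⟨c0, c1, c2, c3, c4⟩ := ih hm
      obtain ⟨k, rfl⟩ : ∃ k, m = k + 1 := ⟨m - 1, by omega⟩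
      have hstep : psiter (PowerSeries.mk a) (k + 2) =
          pscomp (psiter (PowerSeries.mk a) (k + 1)) (PowerSeries.mk a) := rfl
      set g := psiter (PowerSeries.mk a) (k + 1) with hg
      have p00 : PowerSeries.coeff 0 ((PowerSeries.mk a) ^ 0 : PowerSeries R) = 1 := by simp
      have q1 : ∀ j : ℕ, 1 ≤ j → PowerSeries.coeff 0 ((PowerSeries.mk a) ^ j) = 0 := by
        intro j hj
        obtain ⟨i, rfl⟩ : ∃ i, j = i + 1 := ⟨j - 1, by omega⟩
        rw [pow_succ, PowerSeries.coeff_mul, Finset.Nat.sum_antidiagonal_eq_sum_range_succ_mk]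
        simp [Finset.sum_range_succ, h0]
      refine ⟨?_, ?_, ?_, ?_, ?_⟩
      · rw [hstep, pscomp_coeff]
        simp [Finset.sum_range_succ, c0]
      · rw [hstep, pscomp_coeff]
        simp [Finset.sum_range_succ, c0, c1, h1, q1 1 le_rfl]
      · rw [hstep, pscomp_coeff]
        simp [Finset.sum_range_succ, c0, c1, c2, h1, q1 1 le_rfl, q1 2 (by norm_num),
          pow2_2 a h0 h1]
        push_cast
        ring
      · rw [hstep, pscomp_coeff]
        simp only [Finset.sum_range_succ, Finset.sum_range_zero, c0, c1, c2, c3,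
          pow_zero, pow_one, PowerSeries.coeff_one, PowerSeries.coeff_mk,
          pow2_3 a h0 h1, pow3_3 a h0 h1]
        have : ((k : ℕ) + 2).choose 2 = (k + 1).choose 2 + (k + 1) := by
          rw [Nat.choose_succ_succ, Nat.choose_one_right, Nat.add_comm]
        rw [this]
        push_cast
        ring_nf
        try simp [h0]
        try ring
      · rw [hstep, pscomp_coeff]
        simp only [Finset.sum_range_succ, Finset.sum_range_zero, c0, c1, c2, c3, c4,
          pow_zero, pow_one, PowerSeries.coeff_one, PowerSeries.coeff_mk,
          pow2_4 a h0 h1, pow3_4 a h0 h1, pow4_4 a h0 h1]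
        have h2 : ((k : ℕ) + 2).choose 2 = (k + 1).choose 2 + (k + 1) := by
          rw [Nat.choose_succ_succ, Nat.choose_one_right, Nat.add_comm]
        have h3 : ((k : ℕ) + 2).choose 3 = (k + 1).choose 3 + (k + 1).choose 2 := by
          rw [Nat.choose_succ_succ, Nat.add_comm]
        rw [h2, h3]
        push_cast
        ring_nf
        try simp [h0]
        try ring

end aux

/-- Schröder's formula for the fourth coefficient when `a₁ = 1`:
`f_4^(n) = C(n,1) a₄ + C(n,2)(5 a₂ a₃ + a₂³) + 6 C(n,3) a₂³`. -/
theorem schroder_four {R : Type*} [CommRing R] (a : ℕ → R) (h0 : a 0 = 0) (h1 : a 1 = 1)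
    (n : ℕ) (hn : 1 ≤ n) :
    PowerSeries.coeff 4 (psiter (PowerSeries.mk a) n) =
      (n.choose 1 : R) * a 4 + (n.choose 2 : R) * (5 * a 2 * a 3 + a 2 ^ 3)
        + 6 * (n.choose 3 : R) * a 2 ^ 3 := by
  exact (key_s12 a h0 h1 n hn).2.2.2.2
end

section
/- Let f(x) = x + a₂x² + ⋯ + a_k x^k + ⋯ (a₁ = 1) and f^(n) its n-fold composition with coefficients f_k^(n); write a_m^{[j]} for the coefficient of x^m in (f(x))^j. Then for k ≥ 3, f_k^(n) = C(n,1) a_k + ∑_{α=2}^{k−1} C(n,α) · ∑ a_k^{[j₁]} a_{j₁}^{[j₂]} ⋯ a_{j_{α−2}}^{[j_{α−1}]} a_{j_{α−1}}^{[1]}, where the inner sum ranges over all strictly decreasing sequences k−1 ≥ j₁ > j₂ > ⋯ > j_{α−1} ≥ 2, i.e., over all (α−1)-element subsets of {2, …, k−1}. -/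
open PowerSeries Finset

namespace Schroder
variable {R : Type*} [CommRing R]

noncomputable def A (a : ℕ → R) (m j : ℕ) : R := PowerSeries.coeff m ((PowerSeries.mk a) ^ j)

def chains (β k : ℕ) : Finset (Fin (β + 1) → ℕ) :=
  (Fintype.piFinset fun _ : Fin (β + 1) => Finset.range (k + 1)).filter
    (fun j => j 0 = k ∧ StrictAnti j ∧ 2 ≤ j (Fin.last β))

noncomputable def T (a : ℕ → R) (β k : ℕ) : R :=
  ∑ j ∈ chains β k, (∏ t : Fin β, A a (j t.castSucc) (j t.succ)) * a (j (Fin.last β))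

lemma mem_chains_iff {β k : ℕ} {j : Fin (β + 1) → ℕ} :
    j ∈ chains β k ↔ (∀ i, j i < k + 1) ∧ j 0 = k ∧ StrictAnti j ∧ 2 ≤ j (Fin.last β) := by
  simp only [chains, mem_filter, Fintype.mem_piFinset, mem_range, and_assoc]

lemma T_succ (a : ℕ → R) (β k : ℕ) :
    T a (β + 1) k = ∑ m ∈ Finset.Icc 2 (k - 1), A a k m * T a β m := by
  have hrhs : ∀ m : ℕ, A a k m * T a β m =
      ∑ j' ∈ chains β m, A a k m *
        ((∏ t : Fin β, A a (j' t.castSucc) (j' t.succ)) * a (j' (Fin.last β))) := by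
    intro m; rw [T, Finset.mul_sum]
  simp only [hrhs]
  rw [Finset.sum_sigma']
  rw [T]
  refine Finset.sum_nbij' (fun j => ⟨j 1, fun t => j t.succ⟩)
    (fun p => Fin.cons k p.2) ?_ ?_ ?_ ?_ ?_
  · -- forward membership
    rintro j hj
    obtain ⟨hpi, h0, hanti, hlast⟩ := mem_chains_iff.mp hj
    have h01 : (0 : Fin (β + 2)) < 1 := by
      rw [Fin.lt_def, Fin.val_zero, Fin.val_one]; omega
    have h1k : j 1 < k := h0 ▸ hanti h01
    have h1ge : 2 ≤ j 1 := le_trans hlast (hanti.antitone (Fin.le_last 1))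
    rw [Finset.mem_sigma]
    dsimp only
    refine ⟨Finset.mem_Icc.mpr ⟨h1ge, by omega⟩, ?_⟩
    refine mem_chains_iff.mpr ?_
    have hmono : StrictAnti (fun t : Fin (β + 1) => j t.succ) :=
      hanti.comp_strictMono Fin.strictMono_succ
    refine ⟨?_, rfl, hmono, ?_⟩
    · intro i
      have h1le : (1 : Fin (β + 2)) ≤ i.succ := by
        rw [← Fin.succ_zero_eq_one]
        exact Fin.succ_le_succ_iff.mpr (Fin.zero_le i)
      have := hanti.antitone h1le
      show j i.succ < j 1 + 1
      omega
    · show 2 ≤ j (Fin.last β).succ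
      rw [Fin.succ_last]; exact hlast
  · -- backward membership
    rintro ⟨m, j'⟩ hp
    obtain ⟨hm, hj'⟩ := Finset.mem_sigma.mp hp
    dsimp only at hm hj' ⊢
    obtain ⟨hm2, hm1⟩ := Finset.mem_Icc.mp hm
    obtain ⟨hpi, h0, hanti, hlast⟩ := mem_chains_iff.mp hj'
    have hmk : m < k := by omega
    refine mem_chains_iff.mpr ⟨?_, ?_, ?_, ?_⟩
    · intro i
      induction i using Fin.cases with
      | zero => rw [Fin.cons_zero]; omega
      | succ t =>
        rw [Fin.cons_succ]
        have : j' t ≤ j' 0 := hanti.antitone (Fin.zero_le t)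
        omega
    · exact Fin.cons_zero _ _
    · rw [Fin.strictAnti_iff_succ_lt]
      intro i
      induction i using Fin.cases with
      | zero =>
        rw [Fin.castSucc_zero, Fin.cons_zero, Fin.succ_zero_eq_one,
          show (1 : Fin (β + 2)) = (0 : Fin (β + 1)).succ from rfl, Fin.cons_succ, h0]
        exact hmk
      | succ t =>
        rw [← Fin.succ_castSucc, Fin.cons_succ, Fin.cons_succ]
        exact Fin.strictAnti_iff_succ_lt.mp hanti t
    · rw [show Fin.last (β + 1) = (Fin.last β).succ from rfl, Fin.cons_succ]
      exact hlast
  · -- left inverse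
    intro j hj
    obtain ⟨hpi, h0, hanti, hlast⟩ := mem_chains_iff.mp hj
    dsimp only
    funext i
    induction i using Fin.cases with
    | zero => rw [Fin.cons_zero, h0]
    | succ t => rw [Fin.cons_succ]
  · -- right inverse
    rintro ⟨m, j'⟩ hp
    obtain ⟨hm, hj'⟩ := Finset.mem_sigma.mp hp
    dsimp only at hj' ⊢
    obtain ⟨hpi, h0, hanti, hlast⟩ := mem_chains_iff.mp hj'
    refine Sigma.ext ?_ (heq_of_eq ?_)
    · dsimp only
      rw [show (1 : Fin (β + 2)) = (0 : Fin (β + 1)).succ from rfl, Fin.cons_succ, h0]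
    · dsimp only
      funext t
      rw [Fin.cons_succ]
  · -- values agree
    intro j hj
    obtain ⟨hpi, h0, hanti, hlast⟩ := mem_chains_iff.mp hj
    dsimp only
    rw [Fin.prod_univ_succ]
    rw [show ((0 : Fin (β + 1)).castSucc) = (0 : Fin (β + 2)) from rfl, h0,
      show ((0 : Fin (β + 1)).succ) = (1 : Fin (β + 2)) from rfl, mul_assoc]
    rw [Fin.succ_last]
    simp only [Fin.succ_castSucc]

lemma chains_eq_empty {β k : ℕ} (h : k < β + 2) : chains β k = ∅ := by
  ext j
  simp only [chains, mem_filter, Fintype.mem_piFinset, mem_range, notMem_empty, iff_false,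
    not_and]
  intro hpi h0 hanti hlast
  have hcard : (Finset.univ : Finset (Fin (β + 1))).card ≤ (Finset.Icc 2 k).card := by
    apply Finset.card_le_card_of_injOn j
    · intro i _
      refine Finset.mem_Icc.mpr ⟨le_trans hlast (hanti.antitone (Fin.le_last i)), ?_⟩
      exact h0 ▸ hanti.antitone (Fin.zero_le i)
    · exact fun x _ y _ hxy => hanti.injective hxy
  simp only [Finset.card_univ, Fintype.card_fin, Nat.card_Icc] at hcard
  omega

lemma T_eq_zero (a : ℕ → R) {β k : ℕ} (h : k < β + 2) : T a β k = 0 := by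
  rw [T, chains_eq_empty h, Finset.sum_empty]

lemma chains_zero {k : ℕ} (hk : 2 ≤ k) : chains 0 k = {fun _ => k} := by
  ext j
  simp only [chains, mem_filter, Fintype.mem_piFinset, mem_range, Finset.mem_singleton]
  constructor
  · rintro ⟨hpi, h0, -, -⟩
    funext i
    rw [Fin.eq_zero i, h0]
  · rintro rfl
    refine ⟨fun i => Nat.lt_succ_self k, rfl, fun x y hxy => absurd hxy (by omega), ?_⟩
    rw [show (Fin.last 0) = 0 from rfl]; exact hk

lemma T_zero (a : ℕ → R) {k : ℕ} (hk : 2 ≤ k) : T a 0 k = a k := by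
  rw [T, chains_zero hk, Finset.sum_singleton]
  simp


lemma mk_eq (a : ℕ → R) (h0 : a 0 = 0) :
    PowerSeries.mk a = X * PowerSeries.mk (fun i => a (i + 1)) := by
  ext i
  cases i with
  | zero => simp [h0]
  | succ i => simp [PowerSeries.coeff_succ_X_mul]

lemma A_zero_of_lt (a : ℕ → R) (h0 : a 0 = 0) {m j : ℕ} (h : m < j) : A a m j = 0 := by
  rw [A, mk_eq a h0, mul_pow, PowerSeries.coeff_X_pow_mul', if_neg (by omega)]

lemma A_self (a : ℕ → R) (h0 : a 0 = 0) (h1 : a 1 = 1) (m : ℕ) : A a m m = 1 := by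
  rw [A, mk_eq a h0, mul_pow]
  have := PowerSeries.coeff_X_pow_mul ((PowerSeries.mk (fun i => a (i + 1)) : PowerSeries R) ^ m) m 0
  rw [zero_add] at this
  rw [this, PowerSeries.coeff_zero_eq_constantCoeff, map_pow]
  simp [h1]

lemma A_one (a : ℕ → R) (m : ℕ) : A a m 1 = a m := by simp [A]

lemma A_exp_zero (a : ℕ → R) {m : ℕ} (hm : 1 ≤ m) : A a m 0 = 0 := by
  rw [A, pow_zero, PowerSeries.coeff_one, if_neg (by omega)]


noncomputable def G (a : ℕ → R) (n k : ℕ) : R :=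
  if k = 0 then 0 else if k = 1 then 1
  else (n.choose 1 : R) * a k + ∑ β ∈ Finset.Icc 1 (k - 2), (n.choose (β + 1) : R) * T a β k

lemma G_eq (a : ℕ → R) (h0 : a 0 = 0) (h1 : a 1 = 1) (n : ℕ) {j : ℕ} (hj : 2 ≤ j) :
    G a n j = ∑ β ∈ Finset.Icc 0 (j - 2), (n.choose (β + 1) : R) * T a β j := by
  rw [G, if_neg (by omega), if_neg (by omega),
    show Finset.Icc 0 (j - 2) = insert 0 (Finset.Icc 1 (j - 2)) from by ext x; simp; omega,
    Finset.sum_insert (by simp), T_zero a hj, zero_add]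

lemma central (a : ℕ → R) (h0 : a 0 = 0) (h1 : a 1 = 1) (n k : ℕ) (hk : 2 ≤ k) :
    ∑ j ∈ Finset.Icc 2 (k - 1), G a n j * A a k j
      = ∑ β ∈ Finset.Icc 1 (k - 2), (n.choose β : R) * T a β k := by
  rcases eq_or_lt_of_le hk with rfl | hk3
  · simp [show Finset.Icc 2 1 = ∅ from rfl, show Finset.Icc 1 0 = ∅ from rfl]
  have step1 : ∀ j ∈ Finset.Icc 2 (k - 1), G a n j * A a k j
      = ∑ β ∈ Finset.Icc 0 (k - 3), (n.choose (β + 1) : R) * T a β j * A a k j := by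
    intro j hj
    obtain ⟨hj2, hj1⟩ := Finset.mem_Icc.mp hj
    rw [G_eq a h0 h1 n hj2, Finset.sum_mul]
    apply Finset.sum_subset
    · intro β hβ; simp only [Finset.mem_Icc] at hβ ⊢; omega
    · intro β hβ hout
      simp only [Finset.mem_Icc] at hβ hout
      rw [T_eq_zero a (by omega)]
      ring
  rw [Finset.sum_congr rfl step1, Finset.sum_comm]
  have step2 : ∀ β ∈ Finset.Icc 0 (k - 3),
      ∑ j ∈ Finset.Icc 2 (k - 1), (n.choose (β + 1) : R) * T a β j * A a k j
        = (n.choose (β + 1) : R) * T a (β + 1) k := by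
    intro β _
    rw [T_succ, Finset.mul_sum]
    exact Finset.sum_congr rfl fun j _ => by ring
  rw [Finset.sum_congr rfl step2,
    show Finset.Icc 1 (k - 2) = (Finset.Icc 0 (k - 3)).image (· + 1) from by
      ext x; simp; omega,
    Finset.sum_image (fun x _ y _ h => by omega)]

lemma sum_G_A (a : ℕ → R) (h0 : a 0 = 0) (h1 : a 1 = 1) (n k : ℕ) :
    ∑ j ∈ Finset.range (k + 1), G a n j * A a k j = G a (n + 1) k := by
  match k with
  | 0 => simp [G, A]
  | 1 => simp [Finset.sum_range_succ, G, A, h1]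
  | (K + 2) =>
    rw [show Finset.range (K + 2 + 1)
        = insert 0 (insert 1 (insert (K + 2) (Finset.Icc 2 (K + 2 - 1)))) from by
      ext x; simp; omega]
    rw [Finset.sum_insert (by simp only [Finset.mem_insert, Finset.mem_Icc]; omega),
      Finset.sum_insert (by simp only [Finset.mem_insert, Finset.mem_Icc]; omega),
      Finset.sum_insert (by simp only [Finset.mem_Icc]; omega)]
    rw [central a h0 h1 n (K + 2) (by omega), A_one, A_self a h0 h1]
    rw [show G a n 0 = 0 from by simp [G], show G a n 1 = 1 from by simp [G]]
    rw [show G a n (K + 2) = (n.choose 1 : R) * a (K + 2)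
        + ∑ β ∈ Finset.Icc 1 (K + 2 - 2), (n.choose (β + 1) : R) * T a β (K + 2) from by
      rw [G, if_neg (by omega), if_neg (by omega)]]
    rw [show G a (n + 1) (K + 2) = ((n + 1).choose 1 : R) * a (K + 2)
        + ∑ β ∈ Finset.Icc 1 (K + 2 - 2), ((n + 1).choose (β + 1) : R) * T a β (K + 2) from by
      rw [G, if_neg (by omega), if_neg (by omega)]]
    have hch : ∀ β, (((n + 1).choose (β + 1) : ℕ) : R)
        = (n.choose (β + 1) : R) + (n.choose β : R) := by
      intro β
      rw [Nat.choose_succ_succ]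
      push_cast; ring
    rw [Finset.sum_congr rfl (fun β _ => by rw [hch β, add_mul] :
        ∀ β ∈ Finset.Icc 1 (K + 2 - 2), ((n + 1).choose (β + 1) : R) * T a β (K + 2)
          = (n.choose (β + 1) : R) * T a β (K + 2) + (n.choose β : R) * T a β (K + 2)),
      Finset.sum_add_distrib]
    simp only [Nat.choose_one_right]
    push_cast
    ring

lemma coeff_eq_G (a : ℕ → R) (h0 : a 0 = 0) (h1 : a 1 = 1) :
    ∀ n, 1 ≤ n → ∀ k, PowerSeries.coeff k (psiter (PowerSeries.mk a) n) = G a n k := by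
  intro n
  induction n with
  | zero => omega
  | succ n ih =>
    intro _ k
    rcases Nat.eq_zero_or_pos n with rfl | hn
    · show PowerSeries.coeff k (PowerSeries.mk a) = G a 1 k
      rw [PowerSeries.coeff_mk]
      by_cases hk0 : k = 0
      · subst hk0; simp [G, h0]
      by_cases hk1 : k = 1
      · subst hk1; simp [G, h1]
      rw [G, if_neg hk0, if_neg hk1]
      rw [Finset.sum_congr rfl (fun β hβ => by
        rw [Nat.choose_eq_zero_of_lt (by simp at hβ; omega : 1 < β + 1)]
        simp : ∀ β ∈ Finset.Icc 1 (k - 2), ((Nat.choose 1 (β + 1) : ℕ) : R) * T a β k = 0)]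
      simp
    · obtain ⟨m, rfl⟩ : ∃ m, n = m + 1 := ⟨n - 1, by omega⟩
      rw [show psiter (PowerSeries.mk a) (m + 1 + 1)
          = pscomp (psiter (PowerSeries.mk a) (m + 1)) (PowerSeries.mk a) from rfl,
        pscomp, PowerSeries.coeff_mk]
      rw [Finset.sum_congr rfl (fun j _ => by rw [ih (by omega) j]; rfl :
        ∀ j ∈ Finset.range (k + 1),
          PowerSeries.coeff j (psiter (PowerSeries.mk a) (m + 1))
            * PowerSeries.coeff k ((PowerSeries.mk a) ^ j) = G a (m + 1) j * A a k j)]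
      exact sum_G_A a h0 h1 (m + 1) k

end Schroder

/-- Schröder's Theorem (1871): if `a₁ = 1` and `k ≥ 3`, then
`f_k^(n) = C(n,1) a_k + ∑_{α=2}^{k−1} C(n,α) ∑ a_k^{[j₁]} a_{j₁}^{[j₂]} ⋯ a_{j_{α−2}}^{[j_{α−1}]} a_{j_{α−1}}^{[1]}`,
where the inner sum is over all strictly decreasing sequences
`k = j₀ > j₁ > ⋯ > j_{α−1} ≥ 2`.  Here `α = β + 1` and the sequence is encoded as
a strictly antitone `j : Fin (β+1) → ℕ` with `j 0 = k` and `2 ≤ j (Fin.last β)`,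
and `a_m^{[j]}` is the coefficient of `x^m` in `(f(x))^j`. -/
theorem schroder_theorem {R : Type*} [CommRing R] [CharZero R] (a : ℕ → R)
    (h0 : a 0 = 0) (h1 : a 1 = 1) (k n : ℕ) (hk : 3 ≤ k) (hn : 1 ≤ n) :
    PowerSeries.coeff k (psiter (PowerSeries.mk a) n) =
      (n.choose 1 : R) * a k
      + ∑ β ∈ Finset.Icc 1 (k - 2), (n.choose (β + 1) : R) *
          ∑ j ∈ (Fintype.piFinset fun _ : Fin (β + 1) => Finset.range (k + 1)).filter
              (fun j => j 0 = k ∧ StrictAnti j ∧ 2 ≤ j (Fin.last β)),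
            (∏ t : Fin β,
                PowerSeries.coeff (j t.castSucc) ((PowerSeries.mk a) ^ (j t.succ))) *
              a (j (Fin.last β)) := by
  rw [Schroder.coeff_eq_G a h0 h1 n hn k, Schroder.G, if_neg (by omega), if_neg (by omega)]
  rfl
end
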